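/- Let H be an (n−k)×n binary matrix with rows r_1,...,r_{n−k}, and consider the 2(n−k) vectors (r_i, 0) and (0, r_i) in the symplectic space (Z/2)^{2n}. The span of these vectors has the property that the dimension of the span minus the dimension of its radical equals 2·rank(H H^T). (Hence the CSS code built from H requires c = rank(H H^T) ebits.) -/

import Mathlib

open Matrix BigOperators

def pdot {n : ℕ} (a b : Fin n → ZMod 2) : ZMod 2 := ∑ i, a i * b i

def symp {n : ℕ} (v w : (Fin n → ZMod 2) × (Fin n → ZMod 2)) : ZMod 2 :=
  pdot v.1 w.2 + pdot v.2 w.1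

lemma pdot_eq_dot {n : ℕ} (a b : Fin n → ZMod 2) : pdot a b = a ⬝ᵥ b := rfl

def prodSubEquiv {R M N : Type*} [Semiring R] [AddCommMonoid M] [AddCommMonoid N]
    [Module R M] [Module R N] (p : Submodule R M) (q : Submodule R N) :
    ↥(p.prod q) ≃ₗ[R] ↥p × ↥q where
  toFun x := (⟨x.1.1, x.2.1⟩, ⟨x.1.2, x.2.2⟩)
  invFun y := ⟨(y.1.1, y.2.1), ⟨y.1.2, y.2.2⟩⟩
  map_add' _ _ := rfl
  map_smul' _ _ := rfl
  left_inv _ := rfl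
  right_inv _ := rfl

set_option synthInstance.maxHeartbeats 400000 in
theorem css_span_radical_rank (n k : ℕ)
    (H : Matrix (Fin (n - k)) (Fin n) (ZMod 2)) :
    ∃ V R : Submodule (ZMod 2) ((Fin n → ZMod 2) × (Fin n → ZMod 2)),
      V = Submodule.span (ZMod 2)
        ((Set.range fun i => ((H i, 0) : (Fin n → ZMod 2) × (Fin n → ZMod 2))) ∪
         (Set.range fun i => ((0, H i) : (Fin n → ZMod 2) × (Fin n → ZMod 2)))) ∧
      (R : Set ((Fin n → ZMod 2) × (Fin n → ZMod 2))) =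
        {v | v ∈ V ∧ ∀ w ∈ V, symp v w = 0} ∧
      Module.finrank (ZMod 2) V =
        Module.finrank (ZMod 2) R + 2 * (H * Hᵀ).rank := by
  classical
  set U : Submodule (ZMod 2) (Fin n → ZMod 2) :=
    Submodule.span (ZMod 2) (Set.range fun i => H i) with hU
  set M : (Fin n → ZMod 2) →ₗ[ZMod 2] (Fin (n - k) → ZMod 2) := H.mulVecLin with hM
  set W : Submodule (ZMod 2) (Fin n → ZMod 2) := LinearMap.ker M ⊓ U with hW
  refine ⟨U.prod U, W.prod W, ?_, ?_, ?_⟩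
  · -- span of union = U.prod U
    have h1 : (Set.range fun i => ((H i, 0) : (Fin n → ZMod 2) × (Fin n → ZMod 2)))
        = LinearMap.inl (ZMod 2) _ _ '' (Set.range fun i => H i) := by
      rw [← Set.range_comp]; rfl
    have h2 : (Set.range fun i => ((0, H i) : (Fin n → ZMod 2) × (Fin n → ZMod 2)))
        = LinearMap.inr (ZMod 2) _ _ '' (Set.range fun i => H i) := by
      rw [← Set.range_comp]; rfl
    rw [h1, h2, LinearMap.span_inl_union_inr]
  · -- radical
    ext v
    constructor
    · rintro ⟨hv1, hv2⟩
      refine ⟨⟨hv1.2, hv2.2⟩, ?_⟩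
      rintro ⟨c, d⟩ ⟨hc, hd⟩
      simp only [symp, pdot_eq_dot]
      have key : ∀ y ∈ LinearMap.ker M, ∀ x ∈ U, y ⬝ᵥ x = 0 := by
        intro y hy x hx
        induction hx using Submodule.span_induction with
        | mem x hx =>
          obtain ⟨i, rfl⟩ := hx
          have h0 : H i ⬝ᵥ y = 0 := congrFun (LinearMap.mem_ker.mp hy) i
          rw [dotProduct_comm]; exact h0
        | zero => simp
        | add x z _ _ hx hz => rw [dotProduct_add, hx, hz, add_zero]
        | smul a x _ hx => rw [dotProduct_smul, hx, smul_zero]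
      rw [key v.1 hv1.1 d hd, key v.2 hv2.1 c hc, add_zero]
    · rintro ⟨⟨hv1, hv2⟩, hrad⟩
      have hrow : ∀ i, (H i : Fin n → ZMod 2) ∈ U :=
        fun i => Submodule.subset_span ⟨i, rfl⟩
      have hk1 : v.1 ∈ LinearMap.ker M := by
        rw [LinearMap.mem_ker]
        funext i
        have := hrad (0, H i) ⟨Submodule.zero_mem _, hrow i⟩
        simp only [symp, pdot_eq_dot, dotProduct_zero, add_zero] at this
        show H i ⬝ᵥ v.1 = 0
        rw [dotProduct_comm]; exact this
      have hk2 : v.2 ∈ LinearMap.ker M := by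
        rw [LinearMap.mem_ker]
        funext i
        have := hrad (H i, 0) ⟨hrow i, Submodule.zero_mem _⟩
        simp only [symp, pdot_eq_dot, zero_dotProduct, dotProduct_zero, zero_add] at this
        show H i ⬝ᵥ v.2 = 0
        rw [dotProduct_comm]; exact this
      exact ⟨⟨hk1, hv1⟩, ⟨hk2, hv2⟩⟩
  · -- dimensions
    have hfp : ∀ (p : Submodule (ZMod 2) (Fin n → ZMod 2)),
        Module.finrank (ZMod 2) (p.prod p) = 2 * Module.finrank (ZMod 2) p := by
      intro p
      rw [(prodSubEquiv p p).finrank_eq, Module.finrank_prod, two_mul]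
    have hrange : LinearMap.range (Hᵀ).mulVecLin = U := by
      rw [Matrix.range_mulVecLin]; rfl
    have hrank : (H * Hᵀ).rank = Module.finrank (ZMod 2) (U.map M) := by
      rw [Matrix.rank, Matrix.mulVecLin_mul, LinearMap.range_comp, hrange]
    have hrn : Module.finrank (ZMod 2) (U.map M) + Module.finrank (ZMod 2) W
        = Module.finrank (ZMod 2) U := by
      have h := (M ∘ₗ U.subtype).finrank_range_add_finrank_ker
      have hr : LinearMap.range (M ∘ₗ U.subtype) = U.map M := by
        rw [LinearMap.range_comp, Submodule.range_subtype]
      have hk : LinearMap.ker (M ∘ₗ U.subtype) = Submodule.comap U.subtype W := by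
        rw [LinearMap.ker_comp, hW, Submodule.comap_inf, Submodule.comap_subtype_self,
          inf_top_eq]
      rw [hr, hk] at h
      rw [← h]
      congr 1
      exact ((Submodule.comapSubtypeEquivOfLe (inf_le_right : W ≤ U)).finrank_eq).symm
    rw [hfp U, hfp W, hrank]
    omega
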